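/- Suppose the linear design condition (LDC) holds and in addition the constant conditional variance condition (CCC) holds, i.e. Var(X | σ(BᵀX)) equals a constant matrix almost surely. Then Var(X | σ(BᵀX)) = Σ − Σ B (BᵀΣB)⁻¹ Bᵀ Σ almost surely. -/

import Mathlib

open MeasureTheory ProbabilityTheory Matrix

private lemma int_mul_of_memL2 {Ω : Type*} {m : MeasurableSpace Ω} {P : Measure Ω}
    [IsProbabilityMeasure P] {f g : Ω → ℝ} (hf : MemLp f 2 P) (hg : MemLp g 2 P) :
    Integrable (fun ω => f ω * g ω) P := by
  rw [← memLp_one_iff_integrable]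
  have h := hg.smul (p := 2) (q := 2) (r := 1) hf
  exact h

private lemma stmt_8_aux {Ω : Type*} {mΩ : MeasurableSpace Ω} (P : Measure Ω) [IsProbabilityMeasure P]
    {p K : ℕ} (X : Ω → Fin p → ℝ) (hX : Measurable X)
    (hX2 : ∀ i, MemLp (fun ω => X ω i) 2 P)
    (μ : Fin p → ℝ) (hμ : ∀ i, μ i = ∫ ω, X ω i ∂P)
    (Sig : Matrix (Fin p) (Fin p) ℝ)
    (hSig : ∀ i j, Sig i j = ∫ ω, (X ω i - μ i) * (X ω j - μ j) ∂P)
    (hSigInv : IsUnit Sig.det)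
    (β : Fin K → (Fin p → ℝ)) (B : Matrix (Fin p) (Fin K) ℝ) (hB : ∀ i k, B i k = β k i)
    (hBSB : IsUnit (Bᵀ * Sig * B).det)
    -- the σ-algebra σ(BᵀX) and the conditional variance entries
    (mB : MeasurableSpace Ω)
    (hmB : mB = MeasurableSpace.comap (fun ω => Bᵀ *ᵥ X ω) inferInstance)
    (CV : Fin p → Fin p → Ω → ℝ)
    (hCV : ∀ i j, CV i j =
      P[(fun ω => (X ω i - (P[(fun ω' => X ω' i) | mB]) ω) *
          (X ω j - (P[(fun ω' => X ω' j) | mB]) ω)) | mB])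
    -- LDC
    (hLDC : ∀ b : Fin p → ℝ, ∃ (a₀ : ℝ) (a : Fin K → ℝ),
      P[(fun ω => b ⬝ᵥ X ω) | mB] =ᵐ[P] fun ω => a₀ + ∑ k, a k * (β k ⬝ᵥ X ω))
    -- CCC
    (hCCC : ∃ C : Matrix (Fin p) (Fin p) ℝ, ∀ i j, CV i j =ᵐ[P] fun _ => C i j) :
    ∀ i j, CV i j =ᵐ[P] fun _ => (Sig - Sig * B * (Bᵀ * Sig * B)⁻¹ * Bᵀ * Sig) i j := by
  classical
  -- basic measurability
  have hBXcoord : ∀ k, (fun ω => (Bᵀ *ᵥ X ω) k) = fun ω => ∑ l, β k l * X ω l := by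
    intro k; funext ω
    simp [Matrix.mulVec, dotProduct, Matrix.transpose_apply, hB]
  have hBXmeas : Measurable[mΩ] fun ω => Bᵀ *ᵥ X ω :=
    ((Matrix.mulVecLin Bᵀ).continuous_of_finiteDimensional.measurable).comp hX
  have hle : mB ≤ mΩ := by
    rw [hmB]; exact hBXmeas.comap_le
  haveI : SigmaFinite (P.trim hle) := by infer_instance
  -- MemLp of the coordinates of BᵀX
  have hM2 : ∀ k, MemLp (fun ω => (Bᵀ *ᵥ X ω) k) 2 P := by
    intro k
    rw [hBXcoord k]
    exact memLp_finset_sum _ fun l _ => (hX2 l).const_mul _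
  have hMsm : ∀ k, StronglyMeasurable[mB] fun ω => (Bᵀ *ᵥ X ω) k := by
    intro k
    have h1 : Measurable[mB] fun ω => Bᵀ *ᵥ X ω := by
      rw [hmB]; exact Measurable.of_comap_le le_rfl
    exact ((measurable_pi_apply k).comp h1).stronglyMeasurable
  -- choose the LDC coefficients
  choose a₀ a hA using hLDC
  set e : Fin p → (Fin p → ℝ) := fun i' => Pi.single i' 1 with he
  set A : Fin p → Fin K → ℝ := fun i' => a (e i') with hAdef
  set L : Fin p → Ω → ℝ := fun i' ω => a₀ (e i') + ∑ k, A i' k * (β k ⬝ᵥ X ω) with hLdef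
  have hcond : ∀ i', P[(fun ω => X ω i') | mB] =ᵐ[P] L i' := by
    intro i'
    have h := hA (e i')
    have h2 : (fun ω => e i' ⬝ᵥ X ω) = fun ω => X ω i' := by
      funext ω; simp [he]
    rw [h2] at h
    exact h
  have hMk : ∀ k ω, (Bᵀ *ᵥ X ω) k = β k ⬝ᵥ X ω := by
    intro k ω
    simp [Matrix.mulVec, dotProduct, Matrix.transpose_apply, hB]
  have hβ2 : ∀ k, MemLp (fun ω => β k ⬝ᵥ X ω) 2 P := by
    intro k
    have := hM2 k
    simpa only [funext (hMk k)] using this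
  have hL2 : ∀ i', MemLp (L i') 2 P := by
    intro i'
    exact MemLp.add (f := fun _ => a₀ (e i')) (g := fun ω => ∑ k, A i' k * (β k ⬝ᵥ X ω))
      (memLp_const _) (memLp_finset_sum (f := fun k ω => A i' k * (β k ⬝ᵥ X ω)) _
        fun k _ => (hβ2 k).const_mul _)
  -- centered variables
  set Z : Fin p → Ω → ℝ := fun i' ω => X ω i' - μ i' with hZdef
  set Mc : Fin K → Ω → ℝ := fun k ω => (Bᵀ *ᵥ X ω) k - (Bᵀ *ᵥ μ) k with hMcdef
  set W : Fin p → Ω → ℝ := fun i' ω => X ω i' - L i' ω with hWdef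
  have hZ2 : ∀ i', MemLp (Z i') 2 P := fun i' => (hX2 i').sub (memLp_const _)
  have hMc2 : ∀ k, MemLp (Mc k) 2 P := fun k => (hM2 k).sub (memLp_const _)
  have hW2 : ∀ i', MemLp (W i') 2 P := fun i' => (hX2 i').sub (hL2 i')
  have hMcsm : ∀ k, StronglyMeasurable[mB] (Mc k) := fun k =>
    (hMsm k).sub stronglyMeasurable_const
  -- orthogonality: ∫ g · W j' = 0 for mB-measurable g ∈ L²
  have horth : ∀ (j' : Fin p) (g : Ω → ℝ), StronglyMeasurable[mB] g → MemLp g 2 P →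
      ∫ ω, g ω * W j' ω ∂P = 0 := by
    intro j' g hgm hg2
    have hint1 : Integrable (fun ω => g ω * X ω j') P := int_mul_of_memL2 hg2 (hX2 j')
    have hint2 : Integrable (fun ω => g ω * L j' ω) P := int_mul_of_memL2 hg2 (hL2 j')
    have hpull : P[(fun ω => g ω * X ω j') | mB]
        =ᵐ[P] fun ω => g ω * (P[(fun ω' => X ω' j') | mB]) ω := by
      have h := condExp_mul_of_stronglyMeasurable_left (μ := P) hgm
        (f := g) (g := fun ω => X ω j') hint1 ((hX2 j').integrable one_le_two)
      exact h
    have e1 : ∫ ω, g ω * X ω j' ∂P = ∫ ω, g ω * L j' ω ∂P := by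
      rw [← integral_condExp (f := fun ω => g ω * X ω j') hle]
      apply integral_congr_ae
      refine hpull.trans ?_
      filter_upwards [hcond j'] with ω hω
      rw [hω]
    have e2 : ∫ ω, g ω * W j' ω ∂P
        = ∫ ω, g ω * X ω j' ∂P - ∫ ω, g ω * L j' ω ∂P := by
      rw [← integral_sub hint1 hint2]
      apply integral_congr_ae
      filter_upwards with ω
      simp only [hWdef]
      ring
    rw [e2, e1, sub_self]
  have h0 : ∀ j', ∫ ω, W j' ω ∂P = 0 := by
    intro j'
    have := horth j' (fun _ => 1) stronglyMeasurable_const (memLp_const 1)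
    simpa using this
  have hk0 : ∀ j' k, ∫ ω, Mc k ω * W j' ω ∂P = 0 := by
    intro j' k
    exact horth j' (Mc k) (hMcsm k) (hMc2 k)
  -- basic moments
  have hXint : ∀ i', Integrable (fun ω => X ω i') P := fun i' => (hX2 i').integrable one_le_two
  have hZ0 : ∀ i', ∫ ω, Z i' ω ∂P = 0 := by
    intro i'
    simp only [hZdef]
    rw [integral_sub (hXint i') (integrable_const _), integral_const]
    simp [← hμ i']
  have hMc_eq : ∀ k ω, Mc k ω = ∑ l, β k l * Z l ω := by
    intro k ω
    simp only [hMcdef, hZdef, Matrix.mulVec, dotProduct, Matrix.transpose_apply, hB,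
      mul_sub, ← Finset.sum_sub_distrib]
  have hMc0 : ∀ k, ∫ ω, Mc k ω ∂P = 0 := by
    intro k
    rw [show Mc k = fun ω => ∑ l, β k l * Z l ω from funext (hMc_eq k)]
    rw [integral_finset_sum _ fun l _ => ((hZ2 l).integrable one_le_two).const_mul _]
    simp [integral_const_mul, hZ0]
  have hZZ : ∀ i' j', ∫ ω, Z i' ω * Z j' ω ∂P = Sig i' j' := fun i' j' => (hSig i' j').symm
  have hprod : ∀ (f : Ω → ℝ), MemLp f 2 P → ∀ k,
      ∫ ω, f ω * Mc k ω ∂P = ∑ l, β k l * ∫ ω, f ω * Z l ω ∂P := by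
    intro f hf k
    have h1 : (fun ω => f ω * Mc k ω) = fun ω => ∑ l, β k l * (f ω * Z l ω) := by
      funext ω
      rw [hMc_eq, Finset.mul_sum]
      exact Finset.sum_congr rfl fun l _ => by ring
    rw [h1, integral_finset_sum _ fun l _ => (int_mul_of_memL2 hf (hZ2 l)).const_mul _]
    simp_rw [integral_const_mul]
  have hZM : ∀ i' k, ∫ ω, Z i' ω * Mc k ω ∂P = (Sig * B) i' k := by
    intro i' k
    rw [hprod (Z i') (hZ2 i') k, Matrix.mul_apply]
    exact Finset.sum_congr rfl fun l _ => by rw [hZZ, hB]; ring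
  have hMZ : ∀ k j', ∫ ω, Mc k ω * Z j' ω ∂P = (Bᵀ * Sig) k j' := by
    intro k j'
    have hc : ∫ ω, Mc k ω * Z j' ω ∂P = ∫ ω, Z j' ω * Mc k ω ∂P :=
      integral_congr_ae (Filter.Eventually.of_forall fun ω => mul_comm _ _)
    rw [hc, hZM j' k, Matrix.mul_apply, Matrix.mul_apply]
    refine Finset.sum_congr rfl fun l _ => ?_
    rw [Matrix.transpose_apply]
    have hSymm : Sig j' l = Sig l j' := by
      rw [hSig, hSig]
      exact integral_congr_ae (Filter.Eventually.of_forall fun ω => mul_comm _ _)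
    rw [hSymm]; ring
  have hMM : ∀ k k', ∫ ω, Mc k ω * Mc k' ω ∂P = (Bᵀ * Sig * B) k k' := by
    intro k k'
    rw [hprod (Mc k) (hMc2 k) k']
    rw [show Bᵀ * Sig * B = Bᵀ * Sig * B from rfl, Matrix.mul_apply]
    exact Finset.sum_congr rfl fun l _ => by rw [hMZ, hB]; ring
  -- decomposition of W
  set D : Fin p → ℝ := fun j' => μ j' - a₀ (e j') - ∑ k, A j' k * (Bᵀ *ᵥ μ) k with hDdef
  have hWdecomp : ∀ j' ω, W j' ω = Z j' ω - (∑ k, A j' k * Mc k ω) + D j' := by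
    intro j' ω
    simp only [hWdef, hLdef, hZdef, hMcdef, hDdef, mul_sub, Finset.sum_sub_distrib, hMk]
    ring
  -- linear expansion of ∫ f · W j'
  have hexp : ∀ (f : Ω → ℝ), MemLp f 2 P → ∀ j',
      ∫ ω, f ω * W j' ω ∂P
        = ∫ ω, f ω * Z j' ω ∂P - (∑ k, A j' k * ∫ ω, f ω * Mc k ω ∂P)
          + D j' * ∫ ω, f ω ∂P := by
    intro f hf j'
    have h1 : (fun ω => f ω * W j' ω)
        = fun ω => (f ω * Z j' ω - ∑ k, A j' k * (f ω * Mc k ω)) + D j' * f ω := by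
      funext ω
      rw [hWdecomp j' ω]
      have h2 : f ω * ∑ k, A j' k * Mc k ω = ∑ k, A j' k * (f ω * Mc k ω) := by
        rw [Finset.mul_sum]
        exact Finset.sum_congr rfl fun k _ => by ring
      rw [mul_add, mul_sub, h2]
      ring
    have intZ : Integrable (fun ω => f ω * Z j' ω) P := int_mul_of_memL2 hf (hZ2 j')
    have intMk : ∀ k, Integrable (fun ω => A j' k * (f ω * Mc k ω)) P := fun k =>
      (int_mul_of_memL2 hf (hMc2 k)).const_mul _
    have intS : Integrable (fun ω => ∑ k, A j' k * (f ω * Mc k ω)) P :=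
      integrable_finset_sum _ fun k _ => intMk k
    have intf : Integrable f P := hf.integrable one_le_two
    have intSub : Integrable
        (fun ω => f ω * Z j' ω - ∑ k, A j' k * (f ω * Mc k ω)) P := intZ.sub intS
    rw [h1, integral_add intSub (intf.const_mul _), integral_sub intZ intS,
      integral_finset_sum _ fun k _ => intMk k, integral_const_mul]
    simp_rw [integral_const_mul]
  -- the LDC coefficients solve the normal equations
  have hcoef : ∀ j', (Bᵀ * Sig * B) *ᵥ A j' = fun k => (Bᵀ * Sig) k j' := by
    intro j'
    funext k
    have h := hk0 j' k
    rw [hexp (Mc k) (hMc2 k) j', hMZ k j', hMc0 k, mul_zero, add_zero] at h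
    simp_rw [hMM] at h
    rw [sub_eq_zero] at h
    simp only [Matrix.mulVec, dotProduct]
    rw [h]
    exact Finset.sum_congr rfl fun l _ => by ring
  have hAval : ∀ j', A j' = (Bᵀ * Sig * B)⁻¹ *ᵥ (fun k => (Bᵀ * Sig) k j') := by
    intro j'
    have h2 := congrArg (fun v => (Bᵀ * Sig * B)⁻¹ *ᵥ v) (hcoef j')
    simpa [Matrix.mulVec_mulVec, Matrix.nonsing_inv_mul _ hBSB, Matrix.one_mulVec] using h2
  -- value of ∫ W i · W j
  intro i j
  have hWW : ∫ ω, W i ω * W j ω ∂P = Sig i j - ∑ k, A j k * (Sig * B) i k := by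
    have step1 : ∫ ω, W i ω * W j ω ∂P = ∫ ω, W j ω * Z i ω ∂P := by
      have hc : ∫ ω, W i ω * W j ω ∂P = ∫ ω, W j ω * W i ω ∂P :=
        integral_congr_ae (Filter.Eventually.of_forall fun ω => mul_comm _ _)
      rw [hc, hexp (W j) (hW2 j) i]
      have e1 : ∀ k, ∫ ω, W j ω * Mc k ω ∂P = 0 := by
        intro k
        have hc2 : ∫ ω, W j ω * Mc k ω ∂P = ∫ ω, Mc k ω * W j ω ∂P :=
          integral_congr_ae (Filter.Eventually.of_forall fun ω => mul_comm _ _)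
        rw [hc2]; exact hk0 j k
      simp [e1, h0 j]
    have step2 : ∫ ω, W j ω * Z i ω ∂P = ∫ ω, Z i ω * W j ω ∂P :=
      integral_congr_ae (Filter.Eventually.of_forall fun ω => mul_comm _ _)
    rw [step1, step2, hexp (Z i) (hZ2 i) j, hZZ, hZ0, mul_zero, add_zero]
    congr 1
    exact Finset.sum_congr rfl fun k _ => by rw [hZM]
  have hval : ∫ ω, W i ω * W j ω ∂P
      = (Sig - Sig * B * (Bᵀ * Sig * B)⁻¹ * Bᵀ * Sig) i j := by
    rw [hWW, Matrix.sub_apply]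
    congr 1
    rw [hAval j]
    have hassoc : Sig * B * (Bᵀ * Sig * B)⁻¹ * Bᵀ * Sig
        = (Sig * B) * ((Bᵀ * Sig * B)⁻¹ * (Bᵀ * Sig)) := by
      simp only [Matrix.mul_assoc]
    rw [hassoc, Matrix.mul_apply]
    refine Finset.sum_congr rfl fun k _ => ?_
    simp only [Matrix.mul_apply, Matrix.mulVec, dotProduct]
    ring
  -- conditional expectation part
  have hWWint : Integrable (fun ω => W i ω * W j ω) P := int_mul_of_memL2 (hW2 i) (hW2 j)
  have hCVeq : CV i j =ᵐ[P] P[(fun ω => W i ω * W j ω) | mB] := by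
    rw [hCV i j]
    apply condExp_congr_ae
    filter_upwards [hcond i, hcond j] with ω h1 h2
    rw [h1, h2]
  have hCint : ∫ ω, CV i j ω ∂P = ∫ ω, W i ω * W j ω ∂P := by
    rw [integral_congr_ae hCVeq, integral_condExp (f := fun ω => W i ω * W j ω) hle]
  obtain ⟨C, hC⟩ := hCCC
  have hCval : ∫ ω, CV i j ω ∂P = C i j := by
    rw [integral_congr_ae (hC i j)]
    simp
  have hfinal : C i j = (Sig - Sig * B * (Bᵀ * Sig * B)⁻¹ * Bᵀ * Sig) i j := by
    rw [← hCval, hCint, hval]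
  refine (hC i j).trans ?_
  rw [hfinal]


/-- under the linear design condition and the constant conditional
variance condition, `Var(X | σ(BᵀX)) = Σ − Σ B (BᵀΣB)⁻¹ Bᵀ Σ` a.s. (entrywise). -/
theorem stmt_8 {Ω : Type*} [MeasurableSpace Ω] (P : Measure Ω) [IsProbabilityMeasure P]
    {p K : ℕ} (X : Ω → Fin p → ℝ) (hX : Measurable X)
    (hX2 : ∀ i, MemLp (fun ω => X ω i) 2 P)
    (μ : Fin p → ℝ) (hμ : ∀ i, μ i = ∫ ω, X ω i ∂P)
    (Sig : Matrix (Fin p) (Fin p) ℝ)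
    (hSig : ∀ i j, Sig i j = ∫ ω, (X ω i - μ i) * (X ω j - μ j) ∂P)
    (hSigInv : IsUnit Sig.det)
    (β : Fin K → (Fin p → ℝ)) (B : Matrix (Fin p) (Fin K) ℝ) (hB : ∀ i k, B i k = β k i)
    (hBSB : IsUnit (Bᵀ * Sig * B).det)
    -- the σ-algebra σ(BᵀX) and the conditional variance entries
    (mB : MeasurableSpace Ω)
    (hmB : mB = MeasurableSpace.comap (fun ω => Bᵀ *ᵥ X ω) inferInstance)
    (CV : Fin p → Fin p → Ω → ℝ)
    (hCV : ∀ i j, CV i j =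
      P[(fun ω => (X ω i - (P[(fun ω' => X ω' i) | mB]) ω) *
          (X ω j - (P[(fun ω' => X ω' j) | mB]) ω)) | mB])
    -- LDC
    (hLDC : ∀ b : Fin p → ℝ, ∃ (a₀ : ℝ) (a : Fin K → ℝ),
      P[(fun ω => b ⬝ᵥ X ω) | mB] =ᵐ[P] fun ω => a₀ + ∑ k, a k * (β k ⬝ᵥ X ω))
    -- CCC
    (hCCC : ∃ C : Matrix (Fin p) (Fin p) ℝ, ∀ i j, CV i j =ᵐ[P] fun _ => C i j) :
    ∀ i j, CV i j =ᵐ[P] fun _ => (Sig - Sig * B * (Bᵀ * Sig * B)⁻¹ * Bᵀ * Sig) i j :=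
  stmt_8_aux P X hX hX2 μ hμ Sig hSig hSigInv β B hB hBSB mB hmB CV hCV hLDC hCCC
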